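/- Consider a two-stage SMART with observed data (L, A1, R, A2, Y) and potential outcomes Y(a1), Y(a1,a2) in R^n and R(a1) in {0,1} for a1, a2 in {-1,1}. Assume: (ii) sequential randomization: A1 is independent of (L, Y(a1,a2), R(a1)) for all a1, a2, and A2 is conditionally independent of Y(a1,a2) given (A1, R, L) with P(A2 = a2 | A1 = a1, R = 0, L) = P(A2 = a2 | A1 = a1, R = 0) almost surely; (iii) consistency: R = \sum_{a1} 1{A1=a1} R(a1) and Y = \sum_{a1} 1{A1=a1} R(a1) Y(a1) + \sum_{a1,a2} 1{A1=a1} 1{A2=a2} (1 - R(a1)) Y(a1,a2); (iv) positivity: P(A1 = a1) > 0 and P(A2 = a2 | A1 = a1, R = 0) > 0. Define the weight W(a1,a2)(R) = P(A1=a1)^{-1} [ R + (1-R)/P(A2=a2 | A1=a1, R=0) ], the indicator I(a1,a2) = 1{A1=a1}( R + (1-R) 1{A2=a2} ), and W~(a1,a2) = I(a1,a2) W(a1,a2)(R). Then for any fixed (a1,a2) and every bounded measurable function h : R^n \to R^p, almost surely E[ W~(a1,a2) h(Y) \mid L ] = E[ R(a1) h(Y(a1)) + (1 - R(a1)) h(Y(a1,a2))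 \mid L ]. -/

import Mathlib

open MeasureTheory ProbabilityTheory

set_option maxHeartbeats 1000000

lemma intg_of_bdd {Ω E : Type*} [MeasurableSpace Ω] {μ : Measure Ω} [IsFiniteMeasure μ]
    [NormedAddCommGroup E] {f : Ω → E} (hf : AEStronglyMeasurable f μ) {C : ℝ}
    (h : ∀ x, ‖f x‖ ≤ C) : Integrable f μ :=
  ⟨hf, HasFiniteIntegral.of_bounded (ae_of_all _ h)⟩

lemma indep_pull {Ω β : Type*} [MeasurableSpace Ω] [MeasurableSpace β] (μ : Measure Ω)
    [IsProbabilityMeasure μ] {A : Ω → ℝ} {Z : Ω → β} (hA : Measurable A) (hZ : Measurable Z)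
    (h : IndepFun A Z μ) (a : ℝ) (ψ : β → ℝ) (hψ : Measurable ψ) :
    ∫ ω, (if A ω = a then (1:ℝ) else 0) * ψ (Z ω) ∂μ
      = (μ {ω | A ω = a}).toReal * ∫ ω, ψ (Z ω) ∂μ := by
  classical
  have hφ : Measurable (fun x : ℝ => if x = a then (1:ℝ) else 0) :=
    Measurable.ite (MeasurableSet.of_compl (measurableSet_eq.compl)) measurable_const
      measurable_const
  have h2 := IndepFun.integral_mul_eq_mul_integral (h.comp hφ hψ) ((hφ.comp hA).aestronglyMeasurable)
    ((hψ.comp hZ).aestronglyMeasurable)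
  have h3 : ∫ ω, (if A ω = a then (1:ℝ) else 0) ∂μ = (μ {ω | A ω = a}).toReal := by
    have : (fun ω => if A ω = a then (1:ℝ) else 0)
        = Set.indicator {ω | A ω = a} (fun _ => (1:ℝ)) := by
      funext ω; simp [Set.indicator_apply]
    have hs : MeasurableSet {ω | A ω = a} := hA (measurableSet_singleton a)
    rw [this, integral_indicator hs, setIntegral_const, smul_eq_mul, mul_one, measureReal_def]
  calc ∫ ω, (if A ω = a then (1:ℝ) else 0) * ψ (Z ω) ∂μ
      = ∫ ω, ((fun x => if x = a then (1:ℝ) else 0) ∘ A) ω * (ψ ∘ Z) ω ∂μ := rfl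
    _ = (∫ ω, (if A ω = a then (1:ℝ) else 0) ∂μ) * ∫ ω, ψ (Z ω) ∂μ := h2
    _ = (μ {ω | A ω = a}).toReal * ∫ ω, ψ (Z ω) ∂μ := by rw [h3]

lemma map_pull {Ω γ : Type*} [MeasurableSpace Ω] [MeasurableSpace γ] (μ : Measure Ω)
    [IsFiniteMeasure μ] {A : Ω → ℝ} {Y : Ω → γ} (hA : Measurable A) (hY : Measurable Y)
    {T : Set Ω} (hT : MeasurableSet T) (a : ℝ) {p : ℝ} (hp : 0 ≤ p)
    (hkey : ∀ t, MeasurableSet t →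
      (μ (T ∩ A ⁻¹' {a} ∩ Y ⁻¹' t)).toReal = p * (μ (T ∩ Y ⁻¹' t)).toReal)
    (ψ : γ → ℝ) (hψ : Measurable ψ) :
    ∫ ω in T, (if A ω = a then (1:ℝ) else 0) * ψ (Y ω) ∂μ = p * ∫ ω in T, ψ (Y ω) ∂μ := by
  classical
  have hSa : MeasurableSet (A ⁻¹' {a}) := hA (measurableSet_singleton a)
  have h1 : ∫ ω in T, (if A ω = a then (1:ℝ) else 0) * ψ (Y ω) ∂μ
      = ∫ ω in T ∩ A ⁻¹' {a}, ψ (Y ω) ∂μ := by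
    rw [← setIntegral_indicator hSa]
    refine setIntegral_congr_ae hT (ae_of_all _ fun ω _ => ?_)
    by_cases hω : A ω = a <;> simp [Set.indicator_apply, hω]
  have hν : Measure.map Y (μ.restrict (T ∩ A ⁻¹' {a}))
      = ENNReal.ofReal p • Measure.map Y (μ.restrict T) := by
    ext t ht
    rw [Measure.smul_apply, Measure.map_apply hY ht, Measure.map_apply hY ht,
      Measure.restrict_apply (hY ht), Measure.restrict_apply (hY ht), smul_eq_mul]
    have h := hkey t ht
    rw [Set.inter_comm (Y ⁻¹' t) (T ∩ A ⁻¹' {a}), Set.inter_comm (Y ⁻¹' t) T]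
    refine (ENNReal.toReal_eq_toReal_iff' (measure_ne_top μ _) ?_).mp ?_
    · exact ENNReal.mul_ne_top ENNReal.ofReal_ne_top (measure_ne_top μ _)
    · rw [ENNReal.toReal_mul, ENNReal.toReal_ofReal hp]; exact h
  have h2 : ∫ ω in T ∩ A ⁻¹' {a}, ψ (Y ω) ∂μ
      = ∫ y, ψ y ∂(Measure.map Y (μ.restrict (T ∩ A ⁻¹' {a}))) := by
    rw [integral_map hY.aemeasurable hψ.aestronglyMeasurable]
  have h3 : ∫ ω in T, ψ (Y ω) ∂μ = ∫ y, ψ y ∂(Measure.map Y (μ.restrict T)) := by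
    rw [integral_map hY.aemeasurable hψ.aestronglyMeasurable]
  rw [h1, h2, hν, integral_smul_measure, ← h3, ENNReal.toReal_ofReal hp, smul_eq_mul]

lemma abs_mul_le_of_le {a b A B : ℝ} (ha : |a| ≤ A) (hb : |b| ≤ B) (hA : 0 ≤ A) :
    |a * b| ≤ A * B := by
  rw [abs_mul]; exact mul_le_mul ha hb (abs_nonneg _) hA


/-- key identity in the proof of Theorem 4.1.
In a two-stage SMART with observed data `(L, A1, Robs, A2, Yobs)`, potential
outcomes `Ypo a1 a2` (and responder outcomes `Yr a1`), and potential response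
indicators `Rpo a1`, under sequential randomization, consistency and positivity,
for any fixed regimen `(a1,a2)` and every bounded measurable `h`, almost surely
`E[W̃(a1,a2) h(Y) ∣ L] = E[R(a1) h(Y(a1)) + (1-R(a1)) h(Y(a1,a2)) ∣ L]`. -/
theorem stmt2
    {Ω 𝓛 : Type*} [MeasurableSpace Ω] [StandardBorelSpace Ω] [Nonempty Ω]
    [MeasurableSpace 𝓛]
    {n pdim : ℕ}
    (μ : Measure Ω) [IsProbabilityMeasure μ]
    (A1 A2 Robs : Ω → ℝ) (L : Ω → 𝓛)
    (Ypo : ℝ → ℝ → Ω → (Fin n → ℝ))   -- potential outcomes Y(a1,a2)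
    (Yr : ℝ → Ω → (Fin n → ℝ))        -- responder potential outcomes Y(a1)
    (Rpo : ℝ → Ω → ℝ)                 -- potential response indicators R(a1)
    (Yobs : Ω → (Fin n → ℝ))
    (hA1meas : Measurable A1) (hA2meas : Measurable A2)
    (hRmeas : Measurable Robs) (hLmeas : Measurable L)
    (hYpomeas : ∀ a1 a2, Measurable (Ypo a1 a2))
    (hYrmeas : ∀ a1, Measurable (Yr a1))
    (hRpomeas : ∀ a1, Measurable (Rpo a1))
    (hYobsmeas : Measurable Yobs)
    (hA1vals : ∀ ω, A1 ω = 1 ∨ A1 ω = -1)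
    (hA2vals : ∀ ω, A2 ω = 1 ∨ A2 ω = -1)
    (hRpovals : ∀ a1 ω, Rpo a1 ω = 0 ∨ Rpo a1 ω = 1)
    -- (ii) sequential randomization, first stage:
    -- A1 ⫫ (L, potential outcomes, potential response indicators)
    (hindepA1 : IndepFun A1
      (fun ω => (L ω, Yr 1 ω, Yr (-1) ω,
        Ypo 1 1 ω, Ypo 1 (-1) ω, Ypo (-1) 1 ω, Ypo (-1) (-1) ω,
        Rpo 1 ω, Rpo (-1) ω)) μ)
    (hle : MeasurableSpace.comap (fun ω => (A1 ω, Robs ω, L ω)) inferInstance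
      ≤ ‹MeasurableSpace Ω›)
    -- (ii) sequential randomization, second stage: A2 ⫫ Y(a1,a2) given (A1,R,L)
    (hcondindep : ∀ a1 a2 : ℝ, (a1 = 1 ∨ a1 = -1) → (a2 = 1 ∨ a2 = -1) →
      CondIndepFun
        (MeasurableSpace.comap (fun ω => (A1 ω, Robs ω, L ω)) inferInstance)
        hle A2 (Ypo a1 a2) μ)
    -- (ii) the second-stage randomization probability does not depend on L:
    -- P(A2 = a2 ∣ A1 = a1, R = 0, L) = P(A2 = a2 ∣ A1 = a1, R = 0)  a.s.
    (hconstprob : ∀ a1 a2 : ℝ, (a1 = 1 ∨ a1 = -1) → (a2 = 1 ∨ a2 = -1) →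
      ∀ᵐ ω ∂μ, (A1 ω = a1 ∧ Robs ω = 0) →
        (μ[(fun ω' => (if A2 ω' = a2 then (1 : ℝ) else 0))
          | MeasurableSpace.comap (fun ω' => (A1 ω', Robs ω', L ω')) inferInstance]) ω
        = (μ[|{ω' | A1 ω' = a1 ∧ Robs ω' = 0}] {ω' | A2 ω' = a2}).toReal)
    -- (iii) consistency:  R = ∑_{a1} 1{A1=a1} R(a1)
    (hconsR : ∀ ω, Robs ω =
      (if A1 ω = 1 then (1 : ℝ) else 0) * Rpo 1 ω
        + (if A1 ω = -1 then (1 : ℝ) else 0) * Rpo (-1) ω)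
    -- (iii) consistency:
    -- Y = ∑_{a1} 1{A1=a1} R(a1) Y(a1) + ∑_{a1,a2} 1{A1=a1}1{A2=a2}(1-R(a1)) Y(a1,a2)
    (hconsY : ∀ ω, Yobs ω =
      (∑ a1 ∈ ({-1, 1} : Finset ℝ),
        ((if A1 ω = a1 then (1 : ℝ) else 0) * Rpo a1 ω) • Yr a1 ω)
      + ∑ a1 ∈ ({-1, 1} : Finset ℝ), ∑ a2 ∈ ({-1, 1} : Finset ℝ),
        ((if A1 ω = a1 then (1 : ℝ) else 0) * (if A2 ω = a2 then (1 : ℝ) else 0)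
          * (1 - Rpo a1 ω)) • Ypo a1 a2 ω)
    -- (iv) positivity
    (hpos1 : ∀ a1 : ℝ, (a1 = 1 ∨ a1 = -1) → 0 < (μ {ω | A1 ω = a1}).toReal)
    (hpos2 : ∀ a1 a2 : ℝ, (a1 = 1 ∨ a1 = -1) → (a2 = 1 ∨ a2 = -1) →
      0 < (μ[|{ω | A1 ω = a1 ∧ Robs ω = 0}] {ω | A2 ω = a2}).toReal)
    (a1 a2 : ℝ) (ha1 : a1 = 1 ∨ a1 = -1) (ha2 : a2 = 1 ∨ a2 = -1)
    (h : (Fin n → ℝ) → (Fin pdim → ℝ))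
    (hhmeas : Measurable h) (hhbd : ∃ C, ∀ x, ‖h x‖ ≤ C) :
    μ[(fun ω =>
        -- W̃(a1,a2) = I(a1,a2) ⬝ P(A1=a1)⁻¹ [R + (1-R)/P(A2=a2 ∣ A1=a1, R=0)]
        (((if A1 ω = a1 then (1 : ℝ) else 0)
            * (Robs ω + (1 - Robs ω) * (if A2 ω = a2 then (1 : ℝ) else 0)))
          * ((μ {ω' | A1 ω' = a1}).toReal)⁻¹
          * (Robs ω + (1 - Robs ω)
              / (μ[|{ω' | A1 ω' = a1 ∧ Robs ω' = 0}] {ω' | A2 ω' = a2}).toReal))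
        • h (Yobs ω))
      | MeasurableSpace.comap L inferInstance]
    =ᵐ[μ]
    μ[(fun ω => Rpo a1 ω • h (Yr a1 ω) + (1 - Rpo a1 ω) • h (Ypo a1 a2 ω))
      | MeasurableSpace.comap L inferInstance] := by
    classical
  obtain ⟨C, hC⟩ := hhbd
  have hC0 : 0 ≤ C := le_trans (norm_nonneg _) (hC 0)
  set p1 : ℝ := (μ {ω' | A1 ω' = a1}).toReal with hp1def
  set p2 : ℝ := (μ[|{ω' | A1 ω' = a1 ∧ Robs ω' = 0}] {ω' | A2 ω' = a2}).toReal with hp2def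
  have hp1 : 0 < p1 := hpos1 a1 ha1
  have hp2 : 0 < p2 := hpos2 a1 a2 ha1 ha2
  have hm : MeasurableSpace.comap L inferInstance ≤ ‹MeasurableSpace Ω› := hLmeas.comap_le
  haveI : IsFiniteMeasure (μ.trim hm) := isFiniteMeasure_trim hm
  haveI : IsFiniteMeasure (μ.trim hle) := isFiniteMeasure_trim hle
  have hne1 : ¬ ((1:ℝ) = -1) := by norm_num
  have hne2 : ¬ ((-1:ℝ) = 1) := by norm_num
  have hpairne : ((-1:ℝ) ≠ 1) := by norm_num
  -- consistency facts
  have F1 : ∀ x, A1 x = a1 → Robs x = Rpo a1 x := by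
    intro x h1
    rcases ha1 with rfl | rfl <;> rw [hconsR x, h1] <;> simp [hne1, hne2]
  have hR01 : ∀ x, Robs x = 0 ∨ Robs x = 1 := by
    intro x
    rcases hA1vals x with h1 | h1 <;> rw [hconsR x, h1] <;> simp [hne1, hne2] <;>
      exact hRpovals _ x
  have F2 : ∀ x, A1 x = a1 → Rpo a1 x = 1 → Yobs x = Yr a1 x := by
    intro x h1 hr
    rw [hconsY x]
    rcases ha1 with rfl | rfl <;>
      simp [Finset.sum_pair hpairne, h1, hr, hne1, hne2]
  have F3 : ∀ x, A1 x = a1 → Rpo a1 x = 0 → A2 x = a2 → Yobs x = Ypo a1 a2 x := by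
    intro x h1 hr h2
    rw [hconsY x]
    rcases ha1 with rfl | rfl <;> rcases ha2 with rfl | rfl <;>
      rcases hA2vals x with h2' | h2' <;>
      simp_all [Finset.sum_pair hpairne, hne1, hne2]
  -- basic bounds and measurability
  have hi_meas : ∀ i : Fin pdim, Measurable fun y : Fin n → ℝ => h y i :=
    fun i => (measurable_pi_apply i).comp hhmeas
  have hiC : ∀ (y : Fin n → ℝ) (i : Fin pdim), |h y i| ≤ C := by
    intro y i
    calc |h y i| ≤ ‖h y‖ := by
          simpa [Real.norm_eq_abs] using norm_le_pi_norm (h y) i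
      _ ≤ C := hC y
  have hind1meas : Measurable fun x => (if A1 x = a1 then (1:ℝ) else 0) :=
    Measurable.ite (hA1meas (measurableSet_singleton a1)) measurable_const measurable_const
  have hind2meas : Measurable fun x => (if A2 x = a2 then (1:ℝ) else 0) :=
    Measurable.ite (hA2meas (measurableSet_singleton a2)) measurable_const measurable_const
  have hRpoabs : ∀ x, |Rpo a1 x| ≤ 1 := by
    intro x; rcases hRpovals a1 x with hx | hx <;> rw [hx] <;> norm_num
  have h1mRpoabs : ∀ x, |1 - Rpo a1 x| ≤ 1 := by
    intro x; rcases hRpovals a1 x with hx | hx <;> rw [hx] <;> norm_num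
  have hind1abs : ∀ x, |if A1 x = a1 then (1:ℝ) else 0| ≤ 1 := by
    intro x; split_ifs <;> norm_num
  have hind2abs : ∀ x, |if A2 x = a2 then (1:ℝ) else 0| ≤ 1 := by
    intro x; split_ifs <;> norm_num
  -- pointwise (coordinatewise) decomposition of the weighted integrand
  have hdecomp : ∀ (x : Ω) (i : Fin pdim),
      (((if A1 x = a1 then (1 : ℝ) else 0)
          * (Robs x + (1 - Robs x) * (if A2 x = a2 then (1 : ℝ) else 0)))
        * p1⁻¹ * (Robs x + (1 - Robs x) / p2)) * h (Yobs x) i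
      = p1⁻¹ * ((if A1 x = a1 then (1:ℝ) else 0) * (Rpo a1 x * h (Yr a1 x) i))
        + (p1⁻¹ * p2⁻¹) * ((if A1 x = a1 then (1:ℝ) else 0)
            * ((if A2 x = a2 then (1:ℝ) else 0) * ((1 - Rpo a1 x) * h (Ypo a1 a2 x) i))) := by
    intro x i
    by_cases h1 : A1 x = a1
    · have hRx : Robs x = Rpo a1 x := F1 x h1
      rcases hRpovals a1 x with hr | hr
      · by_cases h2 : A2 x = a2
        · rw [F3 x h1 hr h2, hRx, hr, if_pos h1, if_pos h2]
          simp only [div_eq_mul_inv]; ring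
        · rw [hRx, hr, if_pos h1, if_neg h2]
          simp only [div_eq_mul_inv]; ring
      · rw [F2 x h1 hr, hRx, hr, if_pos h1]
        simp only [div_eq_mul_inv]; ring
    · rw [if_neg h1]
      simp only [div_eq_mul_inv]; ring
  -- vector-valued version
  have hdecompv : ∀ x : Ω,
      (((if A1 x = a1 then (1 : ℝ) else 0)
          * (Robs x + (1 - Robs x) * (if A2 x = a2 then (1 : ℝ) else 0)))
        * p1⁻¹ * (Robs x + (1 - Robs x) / p2)) • h (Yobs x)
      = (p1⁻¹ * ((if A1 x = a1 then (1:ℝ) else 0) * Rpo a1 x)) • h (Yr a1 x)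
        + ((p1⁻¹ * p2⁻¹) * ((if A1 x = a1 then (1:ℝ) else 0)
            * ((if A2 x = a2 then (1:ℝ) else 0) * (1 - Rpo a1 x)))) • h (Ypo a1 a2 x) := by
    intro x
    funext i
    have := hdecomp x i
    simp only [Pi.add_apply, Pi.smul_apply, smul_eq_mul]
    rw [this]; ring
  -- integrability of both integrands
  have hFmeas : Measurable (fun ω =>
      (((if A1 ω = a1 then (1 : ℝ) else 0)
          * (Robs ω + (1 - Robs ω) * (if A2 ω = a2 then (1 : ℝ) else 0)))
        * p1⁻¹ * (Robs ω + (1 - Robs ω) / p2)) • h (Yobs ω)) := by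
    refine Measurable.fun_smul ?_ (hhmeas.comp hYobsmeas)
    exact ((hind1meas.mul (hRmeas.add ((measurable_const.sub hRmeas).mul hind2meas))).mul
      measurable_const).mul (hRmeas.add ((measurable_const.sub hRmeas).div_const p2))
  have hFbd : ∀ x, ‖(((if A1 x = a1 then (1 : ℝ) else 0)
          * (Robs x + (1 - Robs x) * (if A2 x = a2 then (1 : ℝ) else 0)))
        * p1⁻¹ * (Robs x + (1 - Robs x) / p2)) • h (Yobs x)‖
      ≤ p1⁻¹ * C + (p1⁻¹ * p2⁻¹) * C := by
    intro x
    rw [hdecompv x]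
    have hb1 : |p1⁻¹ * ((if A1 x = a1 then (1:ℝ) else 0) * Rpo a1 x)| ≤ p1⁻¹ := by
      rw [abs_mul, abs_of_nonneg (by positivity : (0:ℝ) ≤ p1⁻¹)]
      have ht : |(if A1 x = a1 then (1:ℝ) else 0) * Rpo a1 x| ≤ 1 := by
        rw [abs_mul]; exact mul_le_one₀ (hind1abs x) (abs_nonneg _) (hRpoabs x)
      have := mul_le_mul_of_nonneg_left ht (le_of_lt (inv_pos.mpr hp1))
      linarith
    have hb2 : |(p1⁻¹ * p2⁻¹) * ((if A1 x = a1 then (1:ℝ) else 0)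
        * ((if A2 x = a2 then (1:ℝ) else 0) * (1 - Rpo a1 x)))| ≤ p1⁻¹ * p2⁻¹ := by
      rw [abs_mul, abs_of_nonneg (by positivity : (0:ℝ) ≤ p1⁻¹ * p2⁻¹)]
      have ht : |(if A1 x = a1 then (1:ℝ) else 0)
          * ((if A2 x = a2 then (1:ℝ) else 0) * (1 - Rpo a1 x))| ≤ 1 := by
        rw [abs_mul, abs_mul]
        exact mul_le_one₀ (hind1abs x) (by positivity)
          (mul_le_one₀ (hind2abs x) (abs_nonneg _) (h1mRpoabs x))
      have := mul_le_mul_of_nonneg_left ht (by positivity : (0:ℝ) ≤ p1⁻¹ * p2⁻¹)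
      linarith
    refine le_trans (norm_add_le _ _) ?_
    rw [norm_smul, norm_smul, Real.norm_eq_abs, Real.norm_eq_abs]
    have g1 := mul_le_mul hb1 (hC (Yr a1 x)) (norm_nonneg _) (by positivity)
    have g2 := mul_le_mul hb2 (hC (Ypo a1 a2 x)) (norm_nonneg _) (by positivity)
    linarith
  have hFint : Integrable (fun ω =>
      (((if A1 ω = a1 then (1 : ℝ) else 0)
          * (Robs ω + (1 - Robs ω) * (if A2 ω = a2 then (1 : ℝ) else 0)))
        * p1⁻¹ * (Robs ω + (1 - Robs ω) / p2)) • h (Yobs ω)) μ :=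
    intg_of_bdd hFmeas.aestronglyMeasurable hFbd
  have hGmeas : Measurable (fun ω => Rpo a1 ω • h (Yr a1 ω)
      + (1 - Rpo a1 ω) • h (Ypo a1 a2 ω)) :=
    ((hRpomeas a1).smul (hhmeas.comp (hYrmeas a1))).add
      ((measurable_const.sub (hRpomeas a1)).smul (hhmeas.comp (hYpomeas a1 a2)))
  have hGbd : ∀ x, ‖Rpo a1 x • h (Yr a1 x) + (1 - Rpo a1 x) • h (Ypo a1 a2 x)‖ ≤ C + C := by
    intro x
    calc ‖Rpo a1 x • h (Yr a1 x) + (1 - Rpo a1 x) • h (Ypo a1 a2 x)‖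
        ≤ ‖Rpo a1 x • h (Yr a1 x)‖ + ‖(1 - Rpo a1 x) • h (Ypo a1 a2 x)‖ := norm_add_le _ _
      _ ≤ C + C := by
          rw [norm_smul, norm_smul, Real.norm_eq_abs, Real.norm_eq_abs]
          have h1 := hRpoabs x; have h2 := h1mRpoabs x
          have h3 := hC (Yr a1 x); have h4 := hC (Ypo a1 a2 x)
          nlinarith [abs_nonneg (Rpo a1 x), abs_nonneg (1 - Rpo a1 x),
            norm_nonneg (h (Yr a1 x)), norm_nonneg (h (Ypo a1 a2 x))]
  have hGint : Integrable (fun ω => Rpo a1 ω • h (Yr a1 ω)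
      + (1 - Rpo a1 ω) • h (Ypo a1 a2 ω)) μ :=
    intg_of_bdd hGmeas.aestronglyMeasurable hGbd
    -- first-stage independence specialized to the selected regimen
  have hZ'meas : Measurable (fun ω => (L ω, Yr a1 ω, Rpo a1 ω, Ypo a1 a2 ω)) :=
    hLmeas.prodMk ((hYrmeas a1).prodMk ((hRpomeas a1).prodMk (hYpomeas a1 a2)))
  have hindep' : IndepFun A1 (fun ω => (L ω, Yr a1 ω, Rpo a1 ω, Ypo a1 a2 ω)) μ := by
    rcases ha1 with rfl | rfl <;> rcases ha2 with rfl | rfl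
    · exact hindepA1.comp measurable_id
        (show Measurable (fun z : 𝓛 × (Fin n → ℝ) × (Fin n → ℝ) × (Fin n → ℝ) × (Fin n → ℝ)
            × (Fin n → ℝ) × (Fin n → ℝ) × ℝ × ℝ =>
          (z.1, z.2.1, z.2.2.2.2.2.2.2.1, z.2.2.2.1)) by fun_prop)
    · exact hindepA1.comp measurable_id
        (show Measurable (fun z : 𝓛 × (Fin n → ℝ) × (Fin n → ℝ) × (Fin n → ℝ) × (Fin n → ℝ)
            × (Fin n → ℝ) × (Fin n → ℝ) × ℝ × ℝ =>
          (z.1, z.2.1, z.2.2.2.2.2.2.2.1, z.2.2.2.2.1)) by fun_prop)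
    · exact hindepA1.comp measurable_id
        (show Measurable (fun z : 𝓛 × (Fin n → ℝ) × (Fin n → ℝ) × (Fin n → ℝ) × (Fin n → ℝ)
            × (Fin n → ℝ) × (Fin n → ℝ) × ℝ × ℝ =>
          (z.1, z.2.2.1, z.2.2.2.2.2.2.2.2, z.2.2.2.2.2.1)) by fun_prop)
    · exact hindepA1.comp measurable_id
        (show Measurable (fun z : 𝓛 × (Fin n → ℝ) × (Fin n → ℝ) × (Fin n → ℝ) × (Fin n → ℝ)
            × (Fin n → ℝ) × (Fin n → ℝ) × ℝ × ℝ =>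
          (z.1, z.2.2.1, z.2.2.2.2.2.2.2.2, z.2.2.2.2.2.2.1)) by fun_prop)
  -- the key set-integral identity
  have key : ∀ s : Set Ω, MeasurableSet[MeasurableSpace.comap L inferInstance] s →
      ∫ x in s, (((if A1 x = a1 then (1 : ℝ) else 0)
            * (Robs x + (1 - Robs x) * (if A2 x = a2 then (1 : ℝ) else 0)))
          * p1⁻¹ * (Robs x + (1 - Robs x) / p2)) • h (Yobs x) ∂μ
        = ∫ x in s, (Rpo a1 x • h (Yr a1 x) + (1 - Rpo a1 x) • h (Ypo a1 a2 x)) ∂μ := by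
    rintro s ⟨B, hB, rfl⟩
    have hsmeas : MeasurableSet (L ⁻¹' B) := hLmeas hB
    have hBind : Measurable (B.indicator (fun _ : 𝓛 => (1:ℝ))) := measurable_const.indicator hB
    set T : Set Ω := (fun ω => (A1 ω, Robs ω, L ω)) ⁻¹'
      (({a1} : Set ℝ) ×ˢ (({(0:ℝ)} : Set ℝ) ×ˢ B)) with hTdef
    have hTmA : MeasurableSet[MeasurableSpace.comap (fun ω => (A1 ω, Robs ω, L ω))
        inferInstance] T :=
      ⟨({a1} : Set ℝ) ×ˢ (({(0:ℝ)} : Set ℝ) ×ˢ B),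
        (measurableSet_singleton a1).prod ((measurableSet_singleton (0:ℝ)).prod hB), rfl⟩
    have hT : MeasurableSet T := hle T hTmA
    have hTmem : ∀ x, x ∈ T ↔ (A1 x = a1 ∧ Robs x = 0 ∧ L x ∈ B) := by
      intro x
      simp only [hTdef, Set.mem_preimage, Set.mem_prod, Set.mem_singleton_iff]
    -- coordinatewise reduction
    have coord : ∀ (Φ : Ω → Fin pdim → ℝ), Integrable Φ (μ.restrict (L ⁻¹' B)) →
        ∀ i : Fin pdim, (∫ x in L ⁻¹' B, Φ x ∂μ) i = ∫ x in L ⁻¹' B, Φ x i ∂μ := by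
      intro Φ hΦ i
      have := (ContinuousLinearMap.proj (R := ℝ) (φ := fun _ : Fin pdim => ℝ) i).integral_comp_comm hΦ
      simpa using this.symm
    funext i
    rw [coord _ hFint.restrict i, coord _ hGint.restrict i]
    simp only [Pi.smul_apply, Pi.add_apply, smul_eq_mul]
    -- scalar integrands
    have hu1meas : Measurable fun x => Rpo a1 x * h (Yr a1 x) i :=
      (hRpomeas a1).mul ((hi_meas i).comp (hYrmeas a1))
    have hu2meas : Measurable fun x => (1 - Rpo a1 x) * h (Ypo a1 a2 x) i :=
      (measurable_const.sub (hRpomeas a1)).mul ((hi_meas i).comp (hYpomeas a1 a2))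
    have hu1bd : ∀ x, |Rpo a1 x * h (Yr a1 x) i| ≤ C := by
      intro x
      have := abs_mul_le_of_le (hRpoabs x) (hiC (Yr a1 x) i) zero_le_one
      simpa using this
    have hu2bd : ∀ x, |(1 - Rpo a1 x) * h (Ypo a1 a2 x) i| ≤ C := by
      intro x
      have := abs_mul_le_of_le (h1mRpoabs x) (hiC (Ypo a1 a2 x) i) zero_le_one
      simpa using this
    have Iu1 : Integrable (fun x => Rpo a1 x * h (Yr a1 x) i) (μ.restrict (L ⁻¹' B)) :=
      (intg_of_bdd hu1meas.aestronglyMeasurable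
        (fun x => by rw [Real.norm_eq_abs]; exact hu1bd x)).restrict
    have Iu2 : Integrable (fun x => (1 - Rpo a1 x) * h (Ypo a1 a2 x) i)
        (μ.restrict (L ⁻¹' B)) :=
      (intg_of_bdd hu2meas.aestronglyMeasurable
        (fun x => by rw [Real.norm_eq_abs]; exact hu2bd x)).restrict
    have I1 : Integrable (fun x => p1⁻¹ * ((if A1 x = a1 then (1:ℝ) else 0)
        * (Rpo a1 x * h (Yr a1 x) i))) (μ.restrict (L ⁻¹' B)) := by
      refine (intg_of_bdd (C := p1⁻¹ * (1 * C)) ?_ ?_).restrict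
      · exact (measurable_const.mul (hind1meas.mul hu1meas)).aestronglyMeasurable
      · intro x
        rw [Real.norm_eq_abs]
        exact abs_mul_le_of_le (le_of_eq (abs_of_nonneg (by positivity)))
          (abs_mul_le_of_le (hind1abs x) (hu1bd x) zero_le_one) (by positivity)
    have I2 : Integrable (fun x => (p1⁻¹ * p2⁻¹) * ((if A1 x = a1 then (1:ℝ) else 0)
        * ((if A2 x = a2 then (1:ℝ) else 0) * ((1 - Rpo a1 x) * h (Ypo a1 a2 x) i))))
        (μ.restrict (L ⁻¹' B)) := by
      refine (intg_of_bdd (C := (p1⁻¹ * p2⁻¹) * (1 * (1 * C))) ?_ ?_).restrict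
      · exact (measurable_const.mul (hind1meas.mul (hind2meas.mul hu2meas))).aestronglyMeasurable
      · intro x
        rw [Real.norm_eq_abs]
        exact abs_mul_le_of_le (le_of_eq (abs_of_nonneg (by positivity)))
          (abs_mul_le_of_le (hind1abs x)
            (abs_mul_le_of_le (hind2abs x) (hu2bd x) zero_le_one) (by norm_num))
          (by positivity)
    -- stage-one pull-out for the responder term
    have hψ1 : Measurable (fun z : 𝓛 × (Fin n → ℝ) × ℝ × (Fin n → ℝ) =>
        B.indicator (fun _ => (1:ℝ)) z.1 * (z.2.2.1 * h z.2.1 i)) :=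
      (hBind.comp measurable_fst).mul
        ((measurable_fst.comp (measurable_snd.comp measurable_snd)).mul
          ((hi_meas i).comp (measurable_fst.comp measurable_snd)))
    have hψ2 : Measurable (fun z : 𝓛 × (Fin n → ℝ) × ℝ × (Fin n → ℝ) =>
        B.indicator (fun _ => (1:ℝ)) z.1 * ((1 - z.2.2.1) * h z.2.2.2 i)) :=
      (hBind.comp measurable_fst).mul
        ((measurable_const.sub
            (measurable_fst.comp (measurable_snd.comp measurable_snd))).mul
          ((hi_meas i).comp (measurable_snd.comp (measurable_snd.comp measurable_snd))))
    have hC1 : ∫ x in L ⁻¹' B,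
          (if A1 x = a1 then (1:ℝ) else 0) * (Rpo a1 x * h (Yr a1 x) i) ∂μ
        = p1 * ∫ x in L ⁻¹' B, Rpo a1 x * h (Yr a1 x) i ∂μ := by
      have e1 : Set.indicator (L ⁻¹' B)
          (fun x => (if A1 x = a1 then (1:ℝ) else 0) * (Rpo a1 x * h (Yr a1 x) i))
          = fun x => (if A1 x = a1 then (1:ℝ) else 0)
              * (B.indicator (fun _ => (1:ℝ)) (L x) * (Rpo a1 x * h (Yr a1 x) i)) := by
        funext x
        by_cases hx : L x ∈ B <;> simp [Set.indicator_apply, hx, Set.mem_preimage]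
      have e2 : (fun x => B.indicator (fun _ => (1:ℝ)) (L x) * (Rpo a1 x * h (Yr a1 x) i))
          = Set.indicator (L ⁻¹' B) (fun x => Rpo a1 x * h (Yr a1 x) i) := by
        funext x
        by_cases hx : L x ∈ B <;> simp [Set.indicator_apply, hx, Set.mem_preimage]
      have hpull := indep_pull μ hA1meas hZ'meas hindep' a1
        (fun z => B.indicator (fun _ => (1:ℝ)) z.1 * (z.2.2.1 * h z.2.1 i)) hψ1
      rw [← hp1def] at hpull
      calc ∫ x in L ⁻¹' B,
            (if A1 x = a1 then (1:ℝ) else 0) * (Rpo a1 x * h (Yr a1 x) i) ∂μ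
          = ∫ x, (if A1 x = a1 then (1:ℝ) else 0)
              * (B.indicator (fun _ => (1:ℝ)) (L x) * (Rpo a1 x * h (Yr a1 x) i)) ∂μ := by
            rw [← integral_indicator hsmeas, e1]
        _ = p1 * ∫ x, B.indicator (fun _ => (1:ℝ)) (L x)
              * (Rpo a1 x * h (Yr a1 x) i) ∂μ := hpull
        _ = p1 * ∫ x in L ⁻¹' B, Rpo a1 x * h (Yr a1 x) i ∂μ := by
            rw [e2, integral_indicator hsmeas]
    -- stage-two: conditional independence and constant conditional probability
    have hkey : ∀ t, MeasurableSet t →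
        (μ (T ∩ A2 ⁻¹' {a2} ∩ Ypo a1 a2 ⁻¹' t)).toReal
          = p2 * (μ (T ∩ Ypo a1 a2 ⁻¹' t)).toReal := by
      intro t ht
      have hS2 : MeasurableSet (A2 ⁻¹' ({a2} : Set ℝ)) := hA2meas (measurableSet_singleton a2)
      have hSt : MeasurableSet (Ypo a1 a2 ⁻¹' t) := hYpomeas a1 a2 ht
      have hci := (condIndepFun_iff_condExp_inter_preimage_eq_mul hA2meas
        (hYpomeas a1 a2)).mp (hcondindep a1 a2 ha1 ha2) {a2} t (measurableSet_singleton a2) ht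
      have hfun : (fun ω' => if A2 ω' = a2 then (1:ℝ) else 0)
          = Set.indicator (A2 ⁻¹' ({a2} : Set ℝ)) (fun _ => (1:ℝ)) := by
        funext x; by_cases hx : A2 x = a2 <;> simp [Set.indicator_apply, hx]
      calc (μ (T ∩ A2 ⁻¹' {a2} ∩ Ypo a1 a2 ⁻¹' t)).toReal
          = ∫ x in T, Set.indicator (A2 ⁻¹' {a2} ∩ Ypo a1 a2 ⁻¹' t) (fun _ => (1:ℝ)) x ∂μ := by
            rw [setIntegral_indicator (hS2.inter hSt), setIntegral_const, smul_eq_mul, mul_one,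
              ← Set.inter_assoc, measureReal_def]
        _ = ∫ x in T, (μ⟦A2 ⁻¹' {a2} ∩ Ypo a1 a2 ⁻¹' t |
              MeasurableSpace.comap (fun ω => (A1 ω, Robs ω, L ω)) inferInstance⟧) x ∂μ :=
            (setIntegral_condExp hle
              ((integrable_const (1:ℝ)).indicator (hS2.inter hSt)) hTmA).symm
        _ = ∫ x in T, ((μ⟦A2 ⁻¹' {a2} |
              MeasurableSpace.comap (fun ω => (A1 ω, Robs ω, L ω)) inferInstance⟧) x
            * (μ⟦Ypo a1 a2 ⁻¹' t |
              MeasurableSpace.comap (fun ω => (A1 ω, Robs ω, L ω)) inferInstance⟧) x) ∂μ :=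
            setIntegral_congr_ae hT (hci.mono fun x hx _ => hx)
        _ = ∫ x in T, (p2 * (μ⟦Ypo a1 a2 ⁻¹' t |
              MeasurableSpace.comap (fun ω => (A1 ω, Robs ω, L ω)) inferInstance⟧) x) ∂μ := by
            refine setIntegral_congr_ae hT ?_
            filter_upwards [hconstprob a1 a2 ha1 ha2] with x hx hxT
            have h12 := (hTmem x).mp hxT
            have hval := hx ⟨h12.1, h12.2.1⟩
            rw [hfun] at hval
            rw [hval]
        _ = p2 * ∫ x in T, (μ⟦Ypo a1 a2 ⁻¹' t |
              MeasurableSpace.comap (fun ω => (A1 ω, Robs ω, L ω)) inferInstance⟧) x ∂μ := by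
            rw [integral_const_mul]
        _ = p2 * ∫ x in T, Set.indicator (Ypo a1 a2 ⁻¹' t) (fun _ => (1:ℝ)) x ∂μ := by
            rw [setIntegral_condExp hle ((integrable_const (1:ℝ)).indicator hSt) hTmA]
        _ = p2 * (μ (T ∩ Ypo a1 a2 ⁻¹' t)).toReal := by
            rw [setIntegral_indicator hSt, setIntegral_const, smul_eq_mul, mul_one, measureReal_def]
    have hC2 : ∫ x in L ⁻¹' B, (if A1 x = a1 then (1:ℝ) else 0)
          * ((if A2 x = a2 then (1:ℝ) else 0) * ((1 - Rpo a1 x) * h (Ypo a1 a2 x) i)) ∂μ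
        = (p1 * p2) * ∫ x in L ⁻¹' B, (1 - Rpo a1 x) * h (Ypo a1 a2 x) i ∂μ := by
      have ea : Set.indicator (L ⁻¹' B) (fun x => (if A1 x = a1 then (1:ℝ) else 0)
            * ((if A2 x = a2 then (1:ℝ) else 0) * ((1 - Rpo a1 x) * h (Ypo a1 a2 x) i)))
          = Set.indicator T (fun x => (if A2 x = a2 then (1:ℝ) else 0) * h (Ypo a1 a2 x) i) := by
        funext x
        by_cases h1 : A1 x = a1
        · by_cases hxB : L x ∈ B
          · have hRx := F1 x h1
            rcases hRpovals a1 x with hr | hr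
            · have hxT : x ∈ T := (hTmem x).mpr ⟨h1, by rw [hRx, hr], hxB⟩
              simp [Set.indicator_apply, hxT, hxB, h1, hr]
            · have hxT : x ∉ T := by
                intro hc
                have hcc := ((hTmem x).mp hc).2.1
                rw [hRx, hr] at hcc; norm_num at hcc
              simp [Set.indicator_apply, hxT, hxB, h1, hr]
          · have hxT : x ∉ T := fun hc => hxB ((hTmem x).mp hc).2.2
            simp [Set.indicator_apply, hxT, hxB]
        · have hxT : x ∉ T := fun hc => h1 ((hTmem x).mp hc).1
          simp [Set.indicator_apply, hxT, h1]
      have eb := map_pull μ hA2meas (hYpomeas a1 a2) hT a2 hp2.le hkey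
        (fun y => h y i) (hi_meas i)
      have ec : Set.indicator T (fun x => h (Ypo a1 a2 x) i)
          = fun x => (if A1 x = a1 then (1:ℝ) else 0)
              * (B.indicator (fun _ => (1:ℝ)) (L x) * ((1 - Rpo a1 x) * h (Ypo a1 a2 x) i)) := by
        funext x
        by_cases h1 : A1 x = a1
        · by_cases hxB : L x ∈ B
          · have hRx := F1 x h1
            rcases hRpovals a1 x with hr | hr
            · have hxT : x ∈ T := (hTmem x).mpr ⟨h1, by rw [hRx, hr], hxB⟩
              simp [Set.indicator_apply, hxT, hxB, h1, hr]
            · have hxT : x ∉ T := by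
                intro hc
                have hcc := ((hTmem x).mp hc).2.1
                rw [hRx, hr] at hcc; norm_num at hcc
              simp [Set.indicator_apply, hxT, hxB, h1, hr]
          · have hxT : x ∉ T := fun hc => hxB ((hTmem x).mp hc).2.2
            simp [Set.indicator_apply, hxT, hxB]
        · have hxT : x ∉ T := fun hc => h1 ((hTmem x).mp hc).1
          simp [Set.indicator_apply, hxT, h1]
      have ed : (fun x => B.indicator (fun _ => (1:ℝ)) (L x)
            * ((1 - Rpo a1 x) * h (Ypo a1 a2 x) i))
          = Set.indicator (L ⁻¹' B) (fun x => (1 - Rpo a1 x) * h (Ypo a1 a2 x) i) := by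
        funext x
        by_cases hx : L x ∈ B <;> simp [Set.indicator_apply, hx, Set.mem_preimage]
      have hpull := indep_pull μ hA1meas hZ'meas hindep' a1
        (fun z => B.indicator (fun _ => (1:ℝ)) z.1 * ((1 - z.2.2.1) * h z.2.2.2 i)) hψ2
      rw [← hp1def] at hpull
      calc ∫ x in L ⁻¹' B, (if A1 x = a1 then (1:ℝ) else 0)
            * ((if A2 x = a2 then (1:ℝ) else 0) * ((1 - Rpo a1 x) * h (Ypo a1 a2 x) i)) ∂μ
          = ∫ x, Set.indicator T
              (fun x => (if A2 x = a2 then (1:ℝ) else 0) * h (Ypo a1 a2 x) i) x ∂μ := by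
            rw [← integral_indicator hsmeas, ea]
        _ = ∫ x in T, (if A2 x = a2 then (1:ℝ) else 0) * h (Ypo a1 a2 x) i ∂μ :=
            integral_indicator hT
        _ = p2 * ∫ x in T, h (Ypo a1 a2 x) i ∂μ := eb
        _ = p2 * ∫ x, Set.indicator T (fun x => h (Ypo a1 a2 x) i) x ∂μ := by
            rw [integral_indicator hT]
        _ = p2 * ∫ x, (if A1 x = a1 then (1:ℝ) else 0)
              * (B.indicator (fun _ => (1:ℝ)) (L x)
                * ((1 - Rpo a1 x) * h (Ypo a1 a2 x) i)) ∂μ := by rw [ec]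
        _ = p2 * (p1 * ∫ x, B.indicator (fun _ => (1:ℝ)) (L x)
              * ((1 - Rpo a1 x) * h (Ypo a1 a2 x) i) ∂μ) := by rw [hpull]
        _ = (p1 * p2) * ∫ x in L ⁻¹' B, (1 - Rpo a1 x) * h (Ypo a1 a2 x) i ∂μ := by
            rw [ed, integral_indicator hsmeas]; ring
    -- put everything together
    calc ∫ x in L ⁻¹' B, (((if A1 x = a1 then (1 : ℝ) else 0)
            * (Robs x + (1 - Robs x) * (if A2 x = a2 then (1 : ℝ) else 0)))
          * p1⁻¹ * (Robs x + (1 - Robs x) / p2)) * h (Yobs x) i ∂μ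
        = ∫ x in L ⁻¹' B, (p1⁻¹ * ((if A1 x = a1 then (1:ℝ) else 0)
              * (Rpo a1 x * h (Yr a1 x) i))
            + (p1⁻¹ * p2⁻¹) * ((if A1 x = a1 then (1:ℝ) else 0)
              * ((if A2 x = a2 then (1:ℝ) else 0)
                * ((1 - Rpo a1 x) * h (Ypo a1 a2 x) i)))) ∂μ :=
          setIntegral_congr_ae hsmeas (ae_of_all _ fun x _ => hdecomp x i)
      _ = p1⁻¹ * ∫ x in L ⁻¹' B, (if A1 x = a1 then (1:ℝ) else 0)
              * (Rpo a1 x * h (Yr a1 x) i) ∂μ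
          + (p1⁻¹ * p2⁻¹) * ∫ x in L ⁻¹' B, (if A1 x = a1 then (1:ℝ) else 0)
              * ((if A2 x = a2 then (1:ℝ) else 0) * ((1 - Rpo a1 x) * h (Ypo a1 a2 x) i)) ∂μ := by
          rw [integral_add I1 I2, integral_const_mul, integral_const_mul]
      _ = p1⁻¹ * (p1 * ∫ x in L ⁻¹' B, Rpo a1 x * h (Yr a1 x) i ∂μ)
          + (p1⁻¹ * p2⁻¹) * ((p1 * p2) * ∫ x in L ⁻¹' B,
              (1 - Rpo a1 x) * h (Ypo a1 a2 x) i ∂μ) := by rw [hC1, hC2]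
      _ = ∫ x in L ⁻¹' B, Rpo a1 x * h (Yr a1 x) i ∂μ
          + ∫ x in L ⁻¹' B, (1 - Rpo a1 x) * h (Ypo a1 a2 x) i ∂μ := by
          field_simp
      _ = ∫ x in L ⁻¹' B, (Rpo a1 x * h (Yr a1 x) i
            + (1 - Rpo a1 x) * h (Ypo a1 a2 x) i) ∂μ := (integral_add Iu1 Iu2).symm
  -- conclude via uniqueness of conditional expectation
  refine (ae_eq_condExp_of_forall_setIntegral_eq hm hFint
    (fun s _ _ => integrable_condExp.integrableOn) (fun s hs _ => ?_)
    (StronglyMeasurable.aestronglyMeasurable stronglyMeasurable_condExp)).symm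
  rw [setIntegral_condExp hm hGint hs]
  exact (key s hs).symm
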